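/- A standard Young tableau with n boxes is uniquely determined by its shape's first box and its sequence of axial distances (d_1, …, d_{n−1}); equivalently, two standard Young tableaux m, m' of the same size with d_k(m) = d_k(m') for all k are equal. -/
import Mathlib


open Finset
open scoped Classical

/-- A filling `pos : Fin n → ℕ × ℕ` (the cell, as `(row, column)`, containing entry `k+1`)
is a standard Young tableau iff it is injective and every prefix of cells forms a
Young diagram. -/
def IsSYTFun (n : ℕ) (pos : Fin n → ℕ × ℕ) : Prop :=
  Function.Injective pos ∧
    ∀ k : Fin n, ∃ Y : YoungDiagram,
      Y.cells = (Finset.univ.filter (fun j => j ≤ k)).image pos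

/-- A standard Young tableau with `n` boxes. -/
structure SYT (n : ℕ) where
  pos : Fin n → ℕ × ℕ
  isSYT : IsSYTFun n pos

/-- The content (column minus row) of a cell. -/
def cellContent (p : ℕ × ℕ) : ℤ := (p.2 : ℤ) - (p.1 : ℤ)

/-- The axial distance `d_i(m)` between the entries `i` and `i+1` of `m`
(content of the cell of `i+1` minus content of the cell of `i`); `0` when `i`
is out of range. -/
def SYT.d {n : ℕ} (m : SYT n) (i : ℕ) : ℤ :=
  if h : 0 < i ∧ i < n then
    cellContent (m.pos ⟨i, h.2⟩) -
      cellContent (m.pos ⟨i - 1, Nat.lt_of_le_of_lt (Nat.sub_le i 1) h.2⟩)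
  else 0

/-- The shape of a standard Young tableau, as a finite set of cells. -/
def SYT.shape {n : ℕ} (m : SYT n) : Finset (ℕ × ℕ) := Finset.univ.image m.pos

/-- `g_i(m)`: the tableau obtained from `m` by exchanging the entries `i` and `i+1`,
if this again yields a standard Young tableau, and `m` otherwise. -/
noncomputable def SYT.g {n : ℕ} (m : SYT n) (i : ℕ) : SYT n :=
  if h : ∃ h' : 0 < i ∧ i < n,
      IsSYTFun n (m.pos ∘ Equiv.swap
        (⟨i - 1, Nat.lt_of_le_of_lt (Nat.sub_le i 1) h'.2⟩ : Fin n) ⟨i, h'.2⟩) then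
    ⟨_, h.choose_spec⟩
  else m

/-- `(m, m')` is a crossing pair: for some `i` the axial distances differ and the
swaps `g_i` act on both tableaux either both nontrivially or both trivially. -/
def Crossing {n : ℕ} (m m' : SYT n) : Prop :=
  ∃ i : ℕ, 0 < i ∧ i < n ∧ m.d i ≠ m'.d i ∧
    ((|m.d i| ≠ 1 ∧ |m'.d i| ≠ 1) ∨ (|m.d i| = 1 ∧ |m'.d i| = 1))

/-- A standard Young tableau is uniquely determined by its sequence of axial
distances. -/
lemma key_unique {S : Set (ℕ × ℕ)} {c1 c2 : ℕ × ℕ}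
    (h1 : IsLowerSet (insert c1 S)) (h2 : IsLowerSet (insert c2 S))
    (hc1 : c1 ∉ S) (hc2 : c2 ∉ S)
    (hcont : cellContent c1 = cellContent c2) : c1 = c2 := by
  unfold cellContent at hcont
  rcases le_total c1.1 c2.1 with hle | hle
  · have hle2 : c1.2 ≤ c2.2 := by omega
    have := h2 (show c1 ≤ c2 from ⟨hle, hle2⟩) (Set.mem_insert _ _)
    rcases Set.mem_insert_iff.mp this with h' | h'
    · exact h'
    · exact absurd h' hc1
  · have hle2 : c2.2 ≤ c1.2 := by omega
    have := h1 (show c2 ≤ c1 from ⟨hle, hle2⟩) (Set.mem_insert _ _)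
    rcases Set.mem_insert_iff.mp this with h' | h'
    · exact h'.symm
    · exact absurd h' hc2

lemma pos_zero {n : ℕ} (m : SYT n) (h0 : 0 < n) : m.pos ⟨0, h0⟩ = (0, 0) := by
  obtain ⟨Y, hY⟩ := m.isSYT.2 ⟨0, h0⟩
  have hcells : Y.cells = {m.pos ⟨0, h0⟩} := by
    rw [hY]
    ext p
    simp only [mem_image, mem_filter, mem_univ, true_and, mem_singleton]
    constructor
    · rintro ⟨j, hj, rfl⟩
      have : j = ⟨0, h0⟩ := le_antisymm hj (Fin.mk_le_mk.mpr (Nat.zero_le _))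
      rw [this]
    · rintro rfl; exact ⟨_, le_refl _, rfl⟩
  have hmem : ((0, 0) : ℕ × ℕ) ∈ Y.cells := by
    have hp : m.pos ⟨0, h0⟩ ∈ (Y.cells : Set (ℕ × ℕ)) := by
      rw [hcells]; simp
    have := Y.isLowerSet (show ((0,0) : ℕ × ℕ) ≤ m.pos ⟨0, h0⟩ from
      ⟨Nat.zero_le _, Nat.zero_le _⟩) hp
    exact_mod_cast this
  rw [hcells, mem_singleton] at hmem
  exact hmem.symm

lemma prefix_cells {n : ℕ} (m : SYT n) (k : Fin n) (Y : YoungDiagram)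
    (hY : Y.cells = (Finset.univ.filter (fun j => j ≤ k)).image m.pos) :
    Y.cells = insert (m.pos k) ((Finset.univ.filter (fun j => j < k)).image m.pos) := by
  rw [hY]
  ext p
  simp only [mem_image, mem_filter, mem_univ, true_and, mem_insert]
  constructor
  · rintro ⟨j, hj, rfl⟩
    rcases eq_or_lt_of_le hj with rfl | hlt
    · exact Or.inl rfl
    · exact Or.inr ⟨j, hlt, rfl⟩
  · rintro (rfl | ⟨j, hj, rfl⟩)
    · exact ⟨k, le_refl _, rfl⟩
    · exact ⟨j, le_of_lt hj, rfl⟩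

theorem syt_eq_of_axial_distances_eq (n : ℕ) (m m' : SYT n)
    (h : ∀ k : ℕ, m.d k = m'.d k) : m = m' := by
  have hpos : ∀ i : ℕ, ∀ hi : i < n, m.pos ⟨i, hi⟩ = m'.pos ⟨i, hi⟩ := by
    intro i
    induction i using Nat.strong_induction_on with
    | _ i IH =>
      intro hi
      match i with
      | 0 => rw [pos_zero m hi, pos_zero m' hi]
      | (i + 1) =>
        set k : Fin n := ⟨i + 1, hi⟩ with hk
        have hip : i < n := Nat.lt_of_succ_lt hi
        -- prefix finsets equal
        have hSeq : (Finset.univ.filter (fun j => j < k)).image m.pos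
            = (Finset.univ.filter (fun j => j < k)).image m'.pos := by
          apply Finset.image_congr
          intro j hj
          simp only [coe_filter, Set.mem_setOf_eq, mem_univ, true_and] at hj
          have := IH j.val hj j.isLt
          simpa using this
        obtain ⟨Y, hY⟩ := m.isSYT.2 k
        obtain ⟨Y', hY'⟩ := m'.isSYT.2 k
        have hYc := prefix_cells m k Y hY
        have hY'c := prefix_cells m' k Y' hY'
        rw [← hSeq] at hY'c
        set S : Finset (ℕ × ℕ) := (Finset.univ.filter (fun j => j < k)).image m.pos with hS
        -- not mem
        have hnm : m.pos k ∉ (S : Set (ℕ × ℕ)) := by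
          simp only [hS, coe_image, coe_filter, Set.mem_image, Set.mem_setOf_eq, mem_univ,
            true_and]
          rintro ⟨j, hj, hje⟩
          exact absurd (m.isSYT.1 hje) (ne_of_lt hj)
        have hnm' : m'.pos k ∉ (S : Set (ℕ × ℕ)) := by
          rw [hSeq]
          simp only [coe_image, coe_filter, Set.mem_image, Set.mem_setOf_eq, mem_univ, true_and]
          rintro ⟨j, hj, hje⟩
          exact absurd (m'.isSYT.1 hje) (ne_of_lt hj)
        -- lower sets
        have hl1 : IsLowerSet (insert (m.pos k) (S : Set (ℕ × ℕ))) := by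
          have := Y.isLowerSet
          rw [hYc] at this
          simpa using this
        have hl2 : IsLowerSet (insert (m'.pos k) (S : Set (ℕ × ℕ))) := by
          have := Y'.isLowerSet
          rw [hY'c] at this
          simpa using this
        -- contents equal
        have hd := h (i + 1)
        rw [SYT.d, SYT.d, dif_pos ⟨Nat.succ_pos i, hi⟩, dif_pos ⟨Nat.succ_pos i, hi⟩] at hd
        have hfin : (⟨i + 1 - 1, Nat.lt_of_le_of_lt (Nat.sub_le (i+1) 1) hi⟩ : Fin n)
            = ⟨i, hip⟩ := by
          apply Fin.ext; simp
        rw [hfin] at hd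
        have hprev := IH i (Nat.lt_succ_self i) hip
        rw [hprev] at hd
        have hcont : cellContent (m.pos k) = cellContent (m'.pos k) := by
          have : cellContent (m.pos ⟨i+1, hi⟩) = cellContent (m'.pos ⟨i+1, hi⟩) := by
            linarith
          simpa [hk] using this
        exact key_unique hl1 hl2 hnm hnm' hcont
  have hfun : m.pos = m'.pos := by
    funext j
    exact hpos j.val j.isLt
  cases m; cases m'
  simp only at hfun
  subst hfun
  rfl
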